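/- arXiv:1702.01876 — 2 statements merged into one kernel-verified Lean document; each statement's English description precedes it below -/
import Mathlib

section
/- Let w ∈ W and suppose the simple reflection s_i occurs in some reduced expression of w. Then for every λ ∈ V with ⟨λ, α_j∨⟩ > 0 for all j ∈ {1,…,l}, writing λ − w(λ) = Σ_{j=1}^l μ_j α_j in the basis of simple roots, one has μ_j ≥ 0 for all j and μ_i > 0. -/
open scoped RealInnerProductSpace

noncomputable section

/-- The pairing `⟨v, a∨⟩ = 2⟪v,a⟫/⟪a,a⟫` of `v` against the coroot of `a`. -/
def copair {V : Type*} [NormedAddCommGroup V] [InnerProductSpace ℝ V] (v a : V) : ℝ :=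
  2 * ⟪v, a⟫ / ⟪a, a⟫

/-- The orthogonal reflection `s_a` in the hyperplane orthogonal to `a`,
as a linear isometry of `V`. -/
def sRefl {V : Type*} [NormedAddCommGroup V] [InnerProductSpace ℝ V] [FiniteDimensional ℝ V]
    (a : V) : V ≃ₗᵢ[ℝ] V :=
  Submodule.reflection (ℝ ∙ a)ᗮ

/-- A finite crystallographic reduced root system `Φ` spanning a finite-dimensional real inner
product space `V`, together with a choice of positive roots `pos`, simple roots `sroot`,
and fundamental weights `fw`. -/
structure RootSystemCtx (V : Type*) [NormedAddCommGroup V] [InnerProductSpace ℝ V]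
    [FiniteDimensional ℝ V] where
  l : ℕ
  Φ : Finset V
  pos : Finset V
  sroot : Fin l → V
  fw : Fin l → V
  nonzero : ∀ a ∈ Φ, a ≠ (0 : V)
  span_top : Submodule.span ℝ (Φ : Set V) = ⊤
  reduced : ∀ a ∈ Φ, ∀ t : ℝ, t • a ∈ Φ → t = 1 ∨ t = -1
  refl_mem : ∀ a ∈ Φ, ∀ b ∈ Φ, sRefl a b ∈ Φ
  crystal : ∀ a ∈ Φ, ∀ b ∈ Φ, ∃ n : ℤ, copair b a = (n : ℝ)
  pos_subset : pos ⊆ Φ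
  mem_pos_or : ∀ a ∈ Φ, (a ∈ pos ∧ -a ∉ pos) ∨ (a ∉ pos ∧ -a ∈ pos)
  sroot_mem : ∀ i, sroot i ∈ pos
  sroot_indep : LinearIndependent ℝ sroot
  pos_nat_comb : ∀ a ∈ pos, ∃ c : Fin l → ℕ, a = ∑ i, (c i : ℝ) • sroot i
  fw_pairing : ∀ i j, copair (fw i) (sroot j) = if i = j then 1 else 0

namespace RootSystemCtx

variable {V : Type*} [NormedAddCommGroup V] [InnerProductSpace ℝ V] [FiniteDimensional ℝ V]
variable (R : RootSystemCtx V)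

/-- The half sum of the positive roots, `ρ = Σ_i ϖ_i`. -/
def rho : V := ∑ i, R.fw i

/-- The Weyl group `W`, the subgroup of the isometry group of `V` generated by the
reflections in the roots. -/
def weylGroup : Subgroup (V ≃ₗᵢ[ℝ] V) :=
  Subgroup.closure {g | ∃ a ∈ R.Φ, g = sRefl a}

/-- `γ` is an expression of `w` as a product of simple reflections. -/
def IsExpression (w : V ≃ₗᵢ[ℝ] V) (γ : List (Fin R.l)) : Prop :=
  w = (γ.map fun i => sRefl (R.sroot i)).prod

/-- `γ` is a reduced expression of `w`: an expression of minimal possible length. -/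
def IsReducedExpression (w : V ≃ₗᵢ[ℝ] V) (γ : List (Fin R.l)) : Prop :=
  R.IsExpression w γ ∧ ∀ γ' : List (Fin R.l), R.IsExpression w γ' → γ.length ≤ γ'.length

/-- A weight is dominant if it pairs nonnegatively with every simple coroot. -/
def IsDominant (v : V) : Prop := ∀ i, 0 ≤ copair v (R.sroot i)

/-- `d` is the dominant representative `{v}` of the Weyl group orbit of `v`. -/
def IsDomRep (v d : V) : Prop := R.IsDominant d ∧ ∃ w ∈ R.weylGroup, w v = d

end RootSystemCtx

set_option linter.unusedSectionVars false

section Aux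

variable {V : Type*} [NormedAddCommGroup V] [InnerProductSpace ℝ V] [FiniteDimensional ℝ V]

lemma sRefl_apply (a x : V) : sRefl a x = x - copair x a • a := by
  rw [sRefl, Submodule.reflection_orthogonal_apply, Submodule.reflection_singleton_apply, copair]
  simp only [RCLike.ofReal_real_eq_id, id_eq]
  rw [real_inner_comm x a, ← real_inner_self_eq_norm_sq, mul_div_assoc]
  module

lemma copair_map (w : V ≃ₗᵢ[ℝ] V) (x a : V) : copair (w x) (w a) = copair x a := by
  simp [copair, w.inner_map_map]

lemma sRefl_map (w : V ≃ₗᵢ[ℝ] V) (a x : V) : sRefl (w a) (w x) = w (sRefl a x) := by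
  rw [sRefl_apply, sRefl_apply, copair_map, map_sub, map_smul]

lemma sRefl_mul_self (a : V) : sRefl a * sRefl a = 1 := by
  ext x
  simp only [LinearIsometryEquiv.coe_mul, Function.comp_apply, LinearIsometryEquiv.coe_one, id_eq]
  exact Submodule.reflection_reflection _ x

end Aux

namespace RootSystemCtx

variable {V : Type*} [NormedAddCommGroup V] [InnerProductSpace ℝ V] [FiniteDimensional ℝ V]
variable (R : RootSystemCtx V)

/-- The product of the simple reflections indexed by a list. -/
def prodOf (γ : List (Fin R.l)) : V ≃ₗᵢ[ℝ] V := (γ.map fun i => sRefl (R.sroot i)).prod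

lemma prodOf_nil : R.prodOf ([] : List (Fin R.l)) = 1 := rfl

lemma prodOf_cons (p : Fin R.l) (γ : List (Fin R.l)) :
    R.prodOf (p :: γ) = sRefl (R.sroot p) * R.prodOf γ := by
  simp [prodOf]

lemma prodOf_append_single (γ : List (Fin R.l)) (j : Fin R.l) :
    R.prodOf (γ ++ [j]) = R.prodOf γ * sRefl (R.sroot j) := by
  simp [prodOf]

lemma isExpression_prodOf (γ : List (Fin R.l)) : R.IsExpression (R.prodOf γ) γ := rfl

lemma sroot_mem_Φ (j : Fin R.l) : R.sroot j ∈ R.Φ := R.pos_subset (R.sroot_mem j)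

lemma sroot_ne_zero (j : Fin R.l) : R.sroot j ≠ 0 := R.nonzero _ (R.sroot_mem_Φ j)

lemma pos_mem_span (a : V) (ha : a ∈ R.pos) :
    a ∈ Submodule.span ℝ (Set.range R.sroot) := by
  obtain ⟨c, hc⟩ := R.pos_nat_comb a ha
  rw [hc]
  exact Submodule.sum_mem _ fun i _ =>
    Submodule.smul_mem _ _ (Submodule.subset_span (Set.mem_range_self i))

/-- The simple roots form a basis. -/
def bas : Module.Basis (Fin R.l) ℝ V :=
  Module.Basis.mk R.sroot_indep (by
    rw [← R.span_top]
    refine Submodule.span_le.mpr fun a ha => ?_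
    rcases R.mem_pos_or a ha with ⟨h, -⟩ | ⟨-, h⟩
    · exact R.pos_mem_span a h
    · simpa using Submodule.neg_mem _ (R.pos_mem_span (-a) h))

lemma bas_eq : ⇑R.bas = R.sroot := Module.Basis.coe_mk _ _

lemma repr_sroot (j m : Fin R.l) :
    R.bas.repr (R.sroot j) m = if j = m then 1 else 0 := by
  rw [show R.sroot j = R.bas j from (congrFun R.bas_eq j).symm]
  simp [Module.Basis.repr_self, Finsupp.single_apply]

lemma repr_pos_exists (a : V) (ha : a ∈ R.pos) :
    ∃ c : Fin R.l → ℕ, ∀ m, R.bas.repr a m = (c m : ℝ) := by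
  obtain ⟨c, hc⟩ := R.pos_nat_comb a ha
  refine ⟨c, fun m => ?_⟩
  rw [← R.bas_eq] at hc
  rw [hc]
  exact congrFun (R.bas.repr_sum_self _) m

lemma repr_pos_nonneg (a : V) (ha : a ∈ R.pos) (m : Fin R.l) :
    0 ≤ R.bas.repr a m := by
  obtain ⟨c, hc⟩ := R.repr_pos_exists a ha
  rw [hc m]; positivity

lemma pos_of_repr_pos (a : V) (ha : a ∈ R.Φ) (m : Fin R.l)
    (h : 0 < R.bas.repr a m) : a ∈ R.pos := by
  rcases R.mem_pos_or a ha with ⟨hp, -⟩ | ⟨-, hp⟩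
  · exact hp
  · have := R.repr_pos_nonneg _ hp m
    rw [map_neg] at this
    simp only [Finsupp.coe_neg, Pi.neg_apply] at this
    linarith

lemma sRefl_pos (p : Fin R.l) (b : V) (hb : b ∈ R.pos) (hne : b ≠ R.sroot p) :
    sRefl (R.sroot p) b ∈ R.pos := by
  have hbΦ : b ∈ R.Φ := R.pos_subset hb
  obtain ⟨c, hc⟩ := R.repr_pos_exists b hb
  by_cases hall : ∀ m, m ≠ p → c m = 0
  · -- then b is a positive multiple of sroot p, so b = sroot p, contradiction
    exfalso
    have hbp : b = (c p : ℝ) • R.sroot p := by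
      have h1 : R.bas.repr b = R.bas.repr ((c p : ℝ) • R.sroot p) := by
        ext m
        rw [map_smul]
        simp only [Finsupp.coe_smul, Pi.smul_apply, smul_eq_mul]
        rw [hc m, R.repr_sroot]
        by_cases hmp : m = p
        · subst hmp; simp
        · rw [hall m hmp, if_neg (fun h => hmp h.symm)]
          simp
      exact R.bas.repr.injective h1
    have hcp : (c p : ℝ) ≠ 0 := by
      intro h0
      exact R.nonzero b hbΦ (by rw [hbp, h0, zero_smul])
    have hmem : ((c p : ℝ))⁻¹ • b ∈ R.Φ := by
      rw [hbp, smul_smul, inv_mul_cancel₀ hcp, one_smul]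
      exact R.sroot_mem_Φ p
    rcases R.reduced b hbΦ _ hmem with h1 | h1
    · apply hne
      rw [hbp]
      have : (c p : ℝ) = 1 := by
        field_simp at h1
        exact h1.symm
      rw [this, one_smul]
    · have : (0:ℝ) < (c p : ℝ) := lt_of_le_of_ne (Nat.cast_nonneg _) (Ne.symm hcp)
      have h2 : (0:ℝ) < ((c p : ℝ))⁻¹ := by positivity
      rw [h1] at h2; linarith
  · push_neg at hall
    obtain ⟨m, hmp, hcm⟩ := hall
    have hmem : sRefl (R.sroot p) b ∈ R.Φ := R.refl_mem _ (R.sroot_mem_Φ p) _ hbΦ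
    apply R.pos_of_repr_pos _ hmem m
    rw [sRefl_apply, map_sub, map_smul]
    simp only [Finsupp.coe_sub, Finsupp.coe_smul, Pi.sub_apply, Pi.smul_apply, smul_eq_mul]
    rw [R.repr_sroot, if_neg (fun h => hmp h.symm), hc m]
    have : (0:ℝ) < (c m : ℝ) := by exact_mod_cast Nat.pos_of_ne_zero hcm
    linarith

lemma repr_diff_zero : ∀ (γ : List (Fin R.l)) (v : V) (m : Fin R.l), m ∉ γ →
    R.bas.repr (R.prodOf γ v - v) m = 0 := by
  intro γ
  induction γ with
  | nil => intro v m _; simp [prodOf_nil]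
  | cons p rest ih =>
    intro v m hm
    have hmp : m ≠ p := fun h => hm (h ▸ List.mem_cons_self)
    have hmr : m ∉ rest := fun h => hm (List.mem_cons_of_mem p h)
    have key : R.prodOf (p :: rest) v - v =
        (-(copair (R.prodOf rest v) (R.sroot p))) • R.sroot p + (R.prodOf rest v - v) := by
      rw [prodOf_cons, LinearIsometryEquiv.coe_mul, Function.comp_apply, sRefl_apply]
      module
    rw [key, map_add, map_smul]
    simp only [Finsupp.coe_add, Finsupp.coe_smul, Pi.add_apply, Pi.smul_apply, smul_eq_mul]
    rw [R.repr_sroot, if_neg (fun h => hmp h.symm), ih v m hmr]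
    simp

lemma neg_shorten : ∀ (γ : List (Fin R.l)) (j : Fin R.l),
    R.prodOf γ (R.sroot j) ∉ R.pos →
    ∃ δ : List (Fin R.l), R.prodOf δ = R.prodOf γ * sRefl (R.sroot j) ∧
      δ.length ≤ γ.length := by
  intro γ
  induction γ with
  | nil =>
    intro j h
    exact absurd (by simpa [prodOf_nil] using R.sroot_mem j) h
  | cons p rest ih =>
    intro j h
    by_cases hr : R.prodOf rest (R.sroot j) ∈ R.pos
    · have heq : R.prodOf rest (R.sroot j) = R.sroot p := by
        by_contra hne
        apply h
        rw [prodOf_cons, LinearIsometryEquiv.coe_mul, Function.comp_apply]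
        exact R.sRefl_pos p _ hr hne
      refine ⟨rest, ?_, by simp⟩
      have hconj : sRefl (R.sroot p) * R.prodOf rest = R.prodOf rest * sRefl (R.sroot j) := by
        ext x
        simp only [LinearIsometryEquiv.coe_mul, Function.comp_apply]
        rw [← heq, sRefl_map]
      rw [prodOf_cons, mul_assoc, ← hconj, ← mul_assoc, sRefl_mul_self, one_mul]
    · obtain ⟨δ, hδ, hlen⟩ := ih j hr
      refine ⟨p :: δ, ?_, by simpa using Nat.succ_le_succ hlen⟩
      rw [prodOf_cons, prodOf_cons, hδ, mul_assoc]

lemma last_pos (γ' : List (Fin R.l)) (j : Fin R.l)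
    (hred : R.IsReducedExpression (R.prodOf (γ' ++ [j])) (γ' ++ [j])) :
    R.prodOf γ' (R.sroot j) ∈ R.pos := by
  by_contra h
  obtain ⟨δ, hδ, hlen⟩ := R.neg_shorten γ' j h
  have hexp : R.IsExpression (R.prodOf (γ' ++ [j])) δ := by
    show R.prodOf (γ' ++ [j]) = R.prodOf δ
    rw [hδ, prodOf_append_single]
  have := hred.2 δ hexp
  simp only [List.length_append, List.length_singleton] at this
  omega

lemma prefix_red (γ' : List (Fin R.l)) (j : Fin R.l)
    (hred : R.IsReducedExpression (R.prodOf (γ' ++ [j])) (γ' ++ [j])) :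
    R.IsReducedExpression (R.prodOf γ') γ' := by
  refine ⟨rfl, fun δ hδ => ?_⟩
  have hexp : R.IsExpression (R.prodOf (γ' ++ [j])) (δ ++ [j]) := by
    show R.prodOf (γ' ++ [j]) = R.prodOf (δ ++ [j])
    rw [prodOf_append_single, prodOf_append_single]
    rw [show R.prodOf γ' = R.prodOf δ from hδ]
  have := hred.2 _ hexp
  simp only [List.length_append, List.length_singleton] at this
  omega

lemma main_aux : ∀ γ : List (Fin R.l), R.IsReducedExpression (R.prodOf γ) γ →
    ∀ lam : V, (∀ j, 0 < copair lam (R.sroot j)) →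
    (∀ m, 0 ≤ R.bas.repr (lam - R.prodOf γ lam) m) ∧
      ∀ i ∈ γ, 0 < R.bas.repr (lam - R.prodOf γ lam) i := by
  intro γ
  induction γ using List.reverseRecOn with
  | nil =>
    intro _ lam _
    refine ⟨fun m => by simp [prodOf_nil], fun i hi => absurd hi List.not_mem_nil⟩
  | append_singleton γ' j ih =>
    intro hred lam hlam
    have hred' := R.prefix_red γ' j hred
    obtain ⟨ih0, ih1⟩ := ih hred' lam hlam
    have hP : R.prodOf γ' (R.sroot j) ∈ R.pos := R.last_pos γ' j hred
    have key : lam - R.prodOf (γ' ++ [j]) lam =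
        (lam - R.prodOf γ' lam) + copair lam (R.sroot j) • (R.prodOf γ' (R.sroot j)) := by
      rw [prodOf_append_single, LinearIsometryEquiv.coe_mul, Function.comp_apply, sRefl_apply,
        map_sub, map_smul]
      abel
    have hc := hlam j
    have hPn : ∀ m, 0 ≤ R.bas.repr (R.prodOf γ' (R.sroot j)) m :=
      R.repr_pos_nonneg _ hP
    have hrepr : ∀ m, R.bas.repr (lam - R.prodOf (γ' ++ [j]) lam) m =
        R.bas.repr (lam - R.prodOf γ' lam) m +
          copair lam (R.sroot j) * R.bas.repr (R.prodOf γ' (R.sroot j)) m := by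
      intro m
      rw [key, map_add, map_smul]
      simp
    constructor
    · intro m
      rw [hrepr m]
      have := hPn m
      have := ih0 m
      positivity
    · intro i hi
      rw [hrepr i]
      rcases List.mem_append.mp hi with hi' | hi'
      · have := ih1 i hi'
        have := hPn i
        nlinarith
      · have hij : i = j := by simpa using hi'
        subst hij
        by_cases hj : i ∈ γ'
        · have := ih1 i hj
          have := hPn i
          nlinarith
        · have hPj : R.bas.repr (R.prodOf γ' (R.sroot i)) i = 1 := by
            have hz := R.repr_diff_zero γ' (R.sroot i) i hj
            rw [map_sub] at hz
            simp only [Finsupp.coe_sub, Pi.sub_apply] at hz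
            rw [R.repr_sroot, if_pos rfl] at hz
            linarith
          rw [hPj, mul_one]
          have := ih0 i
          linarith

end RootSystemCtx

/-- If the simple reflection `s_i` occurs in some reduced expression of `w`,
then for every `λ` with `⟨λ, α_j∨⟩ > 0` for all `j`, writing `λ − w(λ) = Σ_j μ_j α_j` in the
basis of simple roots, one has `μ_j ≥ 0` for all `j` and `μ_i > 0`. -/
theorem statement2 {V : Type*} [NormedAddCommGroup V] [InnerProductSpace ℝ V]
    [FiniteDimensional ℝ V] (R : RootSystemCtx V)
    (w : V ≃ₗᵢ[ℝ] V) (hw : w ∈ R.weylGroup) (i : Fin R.l)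
    (hocc : ∃ γ : List (Fin R.l), R.IsReducedExpression w γ ∧ i ∈ γ)
    (lam : V) (hlam : ∀ j, 0 < copair lam (R.sroot j))
    (μ : Fin R.l → ℝ) (hμ : lam - w lam = ∑ j, μ j • R.sroot j) :
    (∀ j, 0 ≤ μ j) ∧ 0 < μ i := by
  obtain ⟨γ, hred, hi⟩ := hocc
  have hwγ : w = R.prodOf γ := hred.1
  subst hwγ
  have hμ' : ∀ m, μ m = R.bas.repr (lam - R.prodOf γ lam) m := by
    intro m
    rw [hμ]
    rw [← R.bas_eq]
    exact (congrFun (R.bas.repr_sum_self μ) m).symm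
  obtain ⟨h0, h1⟩ := R.main_aux γ hred lam hlam
  exact ⟨fun j => (hμ' j).symm ▸ h0 j, (hμ' i).symm ▸ h1 i hi⟩
end
end

section
/- Let δ ∈ V be a dominant integral weight, i.e. ⟨δ, α_i∨⟩ is a nonnegative integer for every i, and define its spin norm ‖δ‖_spin := ‖{δ − ρ} + ρ‖. Then ‖δ‖_spin ≥ ‖δ‖, and equality holds if and only if δ is regular, i.e. ⟨δ, α_i∨⟩ > 0 for every i. -/
open scoped RealInnerProductSpace

noncomputable section

section SpinAux

variable {V : Type*} [NormedAddCommGroup V] [InnerProductSpace ℝ V] [FiniteDimensional ℝ V]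

omit [FiniteDimensional ℝ V] in
lemma copair_sub' (x y a : V) : copair (x - y) a = copair x a - copair y a := by
  simp only [copair, inner_sub_left, mul_sub, sub_div]

omit [FiniteDimensional ℝ V] in
lemma copair_sum' {ι : Type*} (s : Finset ι) (f : ι → V) (a : V) :
    copair (∑ i ∈ s, f i) a = ∑ i ∈ s, copair (f i) a := by
  simp only [copair, sum_inner, Finset.mul_sum, Finset.sum_div]

omit [FiniteDimensional ℝ V] in
lemma copair_self' {a : V} (ha : a ≠ 0) : copair a a = 2 := by
  rw [copair, mul_div_assoc, div_self (inner_self_ne_zero.mpr ha), mul_one]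

lemma sRefl_sRefl (a x : V) : sRefl a (sRefl a x) = x := Submodule.reflection_reflection _ x

lemma sRefl_self {a : V} (ha : a ≠ 0) : sRefl a a = -a := by
  rw [sRefl_apply, copair_self' ha, two_smul]; abel

variable (R : RootSystemCtx V)

lemma sroot_mem_Phi (i : Fin R.l) : R.sroot i ∈ R.Φ := R.pos_subset (R.sroot_mem i)

lemma sroot_ne_zero (i : Fin R.l) : R.sroot i ≠ 0 := R.nonzero _ (sroot_mem_Phi R i)

lemma neg_not_mem_pos {a : V} (ha : a ∈ R.pos) : -a ∉ R.pos := by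
  rcases R.mem_pos_or a (R.pos_subset ha) with h | h
  · exact h.2
  · exact absurd ha h.1

lemma neg_mem_pos {a : V} (ha : a ∈ R.Φ) (h : a ∉ R.pos) : -a ∈ R.pos := by
  rcases R.mem_pos_or a ha with h' | h'
  · exact absurd h'.1 h
  · exact h'.2

lemma copair_rho_sroot (j : Fin R.l) : copair R.rho (R.sroot j) = 1 := by
  rw [RootSystemCtx.rho, copair_sum']
  simp [R.fw_pairing]

lemma inner_rho_sroot_pos (j : Fin R.l) : 0 < ⟪R.rho, R.sroot j⟫ := by
  have h := copair_rho_sroot R j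
  have h2 : (0:ℝ) < ⟪R.sroot j, R.sroot j⟫ := by
    rw [real_inner_self_eq_norm_sq]
    have := norm_pos_iff.mpr (sroot_ne_zero R j)
    positivity
  rw [copair, div_eq_one_iff_eq (by positivity)] at h
  linarith

lemma inner_rho_pos {a : V} (ha : a ∈ R.pos) : 0 < ⟪R.rho, a⟫ := by
  obtain ⟨c, hc⟩ := R.pos_nat_comb a ha
  have hne : a ≠ 0 := R.nonzero a (R.pos_subset ha)
  have hex : ∃ i, c i ≠ 0 := by
    by_contra h
    push_neg at h
    apply hne
    rw [hc]
    simp [h]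
  obtain ⟨i0, hi0⟩ := hex
  rw [hc, inner_sum]
  apply Finset.sum_pos'
  · intro i _
    rw [real_inner_smul_right]
    exact mul_nonneg (Nat.cast_nonneg _) (le_of_lt (inner_rho_sroot_pos R i))
  · refine ⟨i0, Finset.mem_univ _, ?_⟩
    rw [real_inner_smul_right]
    have : (0:ℝ) < (c i0 : ℝ) := by exact_mod_cast Nat.pos_of_ne_zero hi0
    exact mul_pos this (inner_rho_sroot_pos R i0)

lemma weyl_maps_root {w : V ≃ₗᵢ[ℝ] V} (hw : w ∈ R.weylGroup) :
    ∀ a ∈ R.Φ, w a ∈ R.Φ := by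
  refine Subgroup.closure_induction (k := {g | ∃ a ∈ R.Φ, g = sRefl a})
    (p := fun g _ => ∀ a ∈ R.Φ, g a ∈ R.Φ) ?_ ?_ ?_ ?_ hw
  · rintro x ⟨b, hb, rfl⟩ a ha
    exact R.refl_mem b hb a ha
  · intro a ha; exact ha
  · intro x y _ _ hx hy a ha
    exact hx _ (hy a ha)
  · intro x _ hx a ha
    have hsurj := Finset.surj_on_of_inj_on_of_card_le (s := R.Φ) (t := R.Φ)
      (f := fun a _ => x a) (fun a haa => hx a haa)
      (fun a₁ a₂ _ _ h => x.injective h) le_rfl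
    obtain ⟨b, hb, hab⟩ := hsurj a ha
    have : x⁻¹ a = b := by rw [hab]; exact x.symm_apply_apply b
    rw [this]; exact hb

/-- Nonnegative combinations of the simple roots. -/
def InCone (x : V) : Prop :=
  ∃ c : Fin R.l → ℝ, (∀ j, 0 ≤ c j) ∧ x = ∑ j, c j • R.sroot j

lemma pos_inCone {a : V} (ha : a ∈ R.pos) : InCone R a := by
  obtain ⟨c, hc⟩ := R.pos_nat_comb a ha
  exact ⟨fun j => (c j : ℝ), fun j => Nat.cast_nonneg _, hc⟩

lemma inCone_smul {r : ℝ} (hr : 0 ≤ r) {x : V} (hx : InCone R x) : InCone R (r • x) := by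
  obtain ⟨c, hc, rfl⟩ := hx
  refine ⟨fun j => r * c j, fun j => mul_nonneg hr (hc j), ?_⟩
  rw [Finset.smul_sum]
  simp [smul_smul]

lemma inCone_sum {ι : Type*} (s : Finset ι) (f : ι → V) (hf : ∀ i ∈ s, InCone R (f i)) :
    InCone R (∑ i ∈ s, f i) := by
  classical
  induction s using Finset.induction_on with
  | empty => exact ⟨fun _ => 0, fun _ => le_rfl, by simp⟩
  | insert _ _ hnot ih =>
    rename_i a s
    rw [Finset.sum_insert hnot]
    obtain ⟨c, hc, hcx⟩ := hf a (Finset.mem_insert_self a s)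
    obtain ⟨d, hd, hdx⟩ := ih fun i hi => hf i (Finset.mem_insert_of_mem hi)
    refine ⟨fun j => c j + d j, fun j => add_nonneg (hc j) (hd j), ?_⟩
    rw [hcx, hdx, ← Finset.sum_add_distrib]
    simp [add_smul]

lemma inCone_neg_eq_zero {x : V} (h1 : InCone R x) (h2 : InCone R (-x)) : x = 0 := by
  obtain ⟨c, hc, hcx⟩ := h1
  obtain ⟨d, hd, hdx⟩ := h2
  have key : ∑ j, (c j + d j) • R.sroot j = 0 := by
    simp only [add_smul, Finset.sum_add_distrib, ← hcx, ← hdx]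
    abel
  have hall := Fintype.linearIndependent_iff.mp R.sroot_indep _ key
  have hc0 : ∀ j, c j = 0 := fun j => le_antisymm (by have := hall j; linarith [hd j]) (hc j)
  rw [hcx]
  simp [hc0]

lemma sRefl_sroot_pos {i : Fin R.l} {b : V} (hb : b ∈ R.pos) (hne : b ≠ R.sroot i) :
    sRefl (R.sroot i) b ∈ R.pos := by
  by_contra h
  have hbΦ := R.pos_subset hb
  have hsΦ : sRefl (R.sroot i) b ∈ R.Φ := R.refl_mem _ (sroot_mem_Phi R i) b hbΦ
  have hneg : -(sRefl (R.sroot i) b) ∈ R.pos := neg_mem_pos R hsΦ h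
  obtain ⟨c, hc⟩ := R.pos_nat_comb b hb
  obtain ⟨d, hd⟩ := R.pos_nat_comb _ hneg
  set m := copair b (R.sroot i) with hm
  have key : ∑ j, (((c j : ℝ) + d j) - (if j = i then m else 0)) • R.sroot j = 0 := by
    simp only [sub_smul, add_smul, Finset.sum_sub_distrib, Finset.sum_add_distrib]
    rw [← hc, ← hd]
    have : ∑ j, (if j = i then m else 0) • R.sroot j = m • R.sroot i := by
      rw [Finset.sum_eq_single i]
      · simp
      · intro j _ hj; simp [hj]
      · intro hj; exact absurd (Finset.mem_univ i) hj
    rw [this]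
    have hs : sRefl (R.sroot i) b = b - m • R.sroot i := sRefl_apply _ _
    have : b + -(sRefl (R.sroot i) b) - m • R.sroot i = 0 := by
      rw [hs]; abel
    linear_combination (norm := abel) this
  have hall := Fintype.linearIndependent_iff.mp R.sroot_indep _ key
  have hcj : ∀ j, j ≠ i → c j = 0 := by
    intro j hj
    have := hall j
    simp [hj] at this
    have h1 : (0:ℝ) ≤ (c j : ℝ) := Nat.cast_nonneg _
    have h2 : (0:ℝ) ≤ (d j : ℝ) := Nat.cast_nonneg _
    exact_mod_cast le_antisymm (by linarith) h1
  have hb2 : b = (c i : ℝ) • R.sroot i := by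
    rw [hc, Finset.sum_eq_single i]
    · intro j _ hj; simp [hcj j hj]
    · intro hj; exact absurd (Finset.mem_univ i) hj
  have hbΦ' : (c i : ℝ) • R.sroot i ∈ R.Φ := hb2 ▸ hbΦ
  rcases R.reduced _ (sroot_mem_Phi R i) _ hbΦ' with h1 | h1
  · exact hne (by rw [hb2, h1, one_smul])
  · have : (0:ℝ) ≤ (c i : ℝ) := Nat.cast_nonneg _
    rw [h1] at this; linarith

section Dec
variable [DecidableEq V]

omit [FiniteDimensional ℝ V] in
omit [DecidableEq V] in
lemma copair_smul' (r : ℝ) (x a : V) : copair (r • x) a = r * copair x a := by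
  simp only [copair, real_inner_smul_left]; ring

lemma image_erase_sroot (i : Fin R.l) :
    (R.pos.erase (R.sroot i)).image (sRefl (R.sroot i)) = R.pos.erase (R.sroot i) := by
  apply Finset.eq_of_subset_of_card_le
  · intro b hb
    obtain ⟨a, ha, rfl⟩ := Finset.mem_image.mp hb
    obtain ⟨hane, hapos⟩ := Finset.mem_erase.mp ha
    refine Finset.mem_erase.mpr ⟨?_, sRefl_sroot_pos R hapos hane⟩
    intro h
    have ha' : a = -R.sroot i := by
      rw [← sRefl_sRefl (R.sroot i) a, h, sRefl_self (sroot_ne_zero R i)]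
    rw [ha'] at hapos
    exact neg_not_mem_pos R (R.sroot_mem i) hapos
  · rw [Finset.card_image_of_injective _ (sRefl (R.sroot i)).injective]

lemma sum_pos_eq_two_rho : ∑ a ∈ R.pos, a = (2:ℝ) • R.rho := by
  set σ := ∑ a ∈ R.pos, a with hσ
  have hsplit : ∀ i : Fin R.l, σ = R.sroot i + ∑ a ∈ R.pos.erase (R.sroot i), a := by
    intro i
    rw [hσ, ← Finset.add_sum_erase _ (fun x => x) (R.sroot_mem i)]
  have hsi : ∀ i, copair σ (R.sroot i) = 2 := by
    intro i
    have hmap : sRefl (R.sroot i) σ = -R.sroot i + ∑ a ∈ R.pos.erase (R.sroot i), a := by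
      rw [hsplit i, map_add, sRefl_self (sroot_ne_zero R i), map_sum]
      congr 1
      calc ∑ a ∈ R.pos.erase (R.sroot i), sRefl (R.sroot i) a
          = ∑ b ∈ (R.pos.erase (R.sroot i)).image (sRefl (R.sroot i)), b := by
            rw [Finset.sum_image (fun x _ y _ h => (sRefl (R.sroot i)).injective h)]
        _ = ∑ a ∈ R.pos.erase (R.sroot i), a := by rw [image_erase_sroot]
    rw [sRefl_apply] at hmap
    have h2 : copair σ (R.sroot i) • R.sroot i = (2:ℝ) • R.sroot i := by
      have hh : σ - copair σ (R.sroot i) • R.sroot i = σ - (2:ℝ) • R.sroot i := by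
        rw [hmap, hsplit i, two_smul]
        abel
      have h3 := congrArg (fun z => σ - z) hh
      simpa using sub_right_injective hh
    exact smul_left_injective ℝ (sroot_ne_zero R i) h2
  have hroot : ∀ j, ⟪σ - (2:ℝ) • R.rho, R.sroot j⟫ = 0 := by
    intro j
    have hcop : copair (σ - (2:ℝ) • R.rho) (R.sroot j) = 0 := by
      rw [copair_sub', hsi j, copair_smul', copair_rho_sroot]
      ring
    rw [copair] at hcop
    have hne : ⟪R.sroot j, R.sroot j⟫ ≠ 0 := inner_self_ne_zero.mpr (sroot_ne_zero R j)
    rw [div_eq_zero_iff] at hcop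
    rcases hcop with h | h
    · linarith
    · exact absurd h hne
  have hΦ : ∀ a ∈ R.Φ, ⟪σ - (2:ℝ) • R.rho, a⟫ = 0 := by
    have hpos' : ∀ a ∈ R.pos, ⟪σ - (2:ℝ) • R.rho, a⟫ = 0 := by
      intro a ha
      obtain ⟨c, hc⟩ := R.pos_nat_comb a ha
      rw [hc, inner_sum]
      refine Finset.sum_eq_zero fun j _ => ?_
      rw [real_inner_smul_right, hroot j, mul_zero]
    intro a ha
    rcases R.mem_pos_or a ha with h | h
    · exact hpos' a h.1
    · have := hpos' _ h.2
      rw [inner_neg_right] at this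
      linarith
  have hall : ∀ y : V, ⟪σ - (2:ℝ) • R.rho, y⟫ = 0 := by
    intro y
    have hy : y ∈ Submodule.span ℝ (R.Φ : Set V) := by rw [R.span_top]; trivial
    induction hy using Submodule.span_induction with
    | mem x hx => exact hΦ x hx
    | zero => exact inner_zero_right _
    | add x y _ _ hx hy => rw [inner_add_right, hx, hy, add_zero]
    | smul r x _ hx => rw [real_inner_smul_right, hx, mul_zero]
  have : σ - (2:ℝ) • R.rho = 0 := by
    have := hall (σ - (2:ℝ) • R.rho)
    exact inner_self_eq_zero.mp this
  have h0 := sub_eq_zero.mp this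
  rw [hσ] at h0
  exact h0

lemma weyl_pos_stable {w : V ≃ₗᵢ[ℝ] V} (hw : w ∈ R.weylGroup)
    (h : ∀ i, w (R.sroot i) ∈ R.pos) : ∀ a ∈ R.pos, w a ∈ R.pos := by
  intro a ha
  obtain ⟨c, hc⟩ := R.pos_nat_comb a ha
  have hwaΦ : w a ∈ R.Φ := weyl_maps_root R hw a (R.pos_subset ha)
  have hcone : InCone R (w a) := by
    rw [hc, map_sum]
    refine inCone_sum R _ _ fun i _ => ?_
    rw [map_smul]
    exact inCone_smul R (Nat.cast_nonneg _) (pos_inCone R (h i))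
  by_contra h'
  have h0 := inCone_neg_eq_zero R hcone (pos_inCone R (neg_mem_pos R hwaΦ h'))
  exact R.nonzero _ hwaΦ h0

lemma weyl_fix_rho {w : V ≃ₗᵢ[ℝ] V} (hw : w ∈ R.weylGroup)
    (h : ∀ i, w (R.sroot i) ∈ R.pos) : w R.rho = R.rho := by
  have himg : R.pos.image w = R.pos := by
    apply Finset.eq_of_subset_of_card_le
    · intro b hb
      obtain ⟨a, ha, rfl⟩ := Finset.mem_image.mp hb
      exact weyl_pos_stable R hw h a ha
    · rw [Finset.card_image_of_injective _ w.injective]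
  have hσ : w (∑ a ∈ R.pos, a) = ∑ a ∈ R.pos, a := by
    rw [map_sum]
    calc ∑ a ∈ R.pos, w a = ∑ b ∈ R.pos.image w, b := by
          rw [Finset.sum_image (fun x _ y _ hxy => w.injective hxy)]
      _ = ∑ a ∈ R.pos, a := by rw [himg]
  rw [sum_pos_eq_two_rho, map_smul] at hσ
  have := smul_right_injective V (two_ne_zero (α := ℝ)) hσ
  exact this

lemma filter_card_lt {w : V ≃ₗᵢ[ℝ] V} (hw : w ∈ R.weylGroup) {i : Fin R.l}
    (hi : w (R.sroot i) ∉ R.pos) :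
    (R.pos.filter (fun a => (w * sRefl (R.sroot i)) a ∉ R.pos)).card <
      (R.pos.filter (fun a => w a ∉ R.pos)).card := by
  classical
  set αi := R.sroot i with hαi
  set N := R.pos.filter (fun a => w a ∉ R.pos) with hN
  have hNi : αi ∈ N := Finset.mem_filter.mpr ⟨R.sroot_mem i, hi⟩
  have hwneg : w (-αi) ∈ R.pos := by
    rw [map_neg]
    exact neg_mem_pos R (weyl_maps_root R hw _ (sroot_mem_Phi R i)) hi
  have hmul : ∀ x : V, (w * sRefl αi) x = w (sRefl αi x) := fun x => rfl
  have hEq : R.pos.filter (fun a => (w * sRefl αi) a ∉ R.pos) = (N.erase αi).image (sRefl αi) := by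
    ext a
    constructor
    · intro ha
      obtain ⟨hapos, hwa⟩ := Finset.mem_filter.mp ha
      rw [hmul] at hwa
      have hane : a ≠ αi := by
        rintro rfl
        rw [sRefl_self (sroot_ne_zero R i)] at hwa
        exact hwa hwneg
      refine Finset.mem_image.mpr ⟨sRefl αi a, ?_, sRefl_sRefl _ _⟩
      refine Finset.mem_erase.mpr ⟨?_, ?_⟩
      · intro h
        have : a = -αi := by
          rw [← sRefl_sRefl αi a, h, sRefl_self (sroot_ne_zero R i)]
        rw [this] at hapos
        exact neg_not_mem_pos R (R.sroot_mem i) hapos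
      · exact Finset.mem_filter.mpr ⟨sRefl_sroot_pos R hapos hane, hwa⟩
    · intro ha
      obtain ⟨b, hb, rfl⟩ := Finset.mem_image.mp ha
      obtain ⟨hbne, hbN⟩ := Finset.mem_erase.mp hb
      obtain ⟨hbpos, hwb⟩ := Finset.mem_filter.mp hbN
      refine Finset.mem_filter.mpr ⟨sRefl_sroot_pos R hbpos hbne, ?_⟩
      rw [hmul, sRefl_sRefl]
      exact hwb
  rw [hEq, Finset.card_image_of_injective _ (sRefl αi).injective,
    Finset.card_erase_of_mem hNi]
  exact Nat.sub_lt (Finset.card_pos.mpr ⟨αi, hNi⟩) one_pos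

lemma key_lemma {v : V} (hv : R.IsDominant v) :
    ∀ w ∈ R.weylGroup, ⟪w v, R.rho⟫ ≤ ⟪v, R.rho⟫ := by
  classical
  suffices H : ∀ k : ℕ, ∀ w ∈ R.weylGroup,
      (R.pos.filter (fun a => w a ∉ R.pos)).card = k → ⟪w v, R.rho⟫ ≤ ⟪v, R.rho⟫ by
    intro w hw
    exact H _ w hw rfl
  intro k
  induction k using Nat.strong_induction_on with
  | _ k IH =>
    intro w hw hk
    by_cases hall : ∀ i, w (R.sroot i) ∈ R.pos
    · have hfix := weyl_fix_rho R hw hall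
      calc ⟪w v, R.rho⟫ = ⟪w v, w R.rho⟫ := by rw [hfix]
        _ = ⟪v, R.rho⟫ := w.inner_map_map v R.rho
        _ ≤ ⟪v, R.rho⟫ := le_rfl
    · push_neg at hall
      obtain ⟨i, hi⟩ := hall
      have hsiW : sRefl (R.sroot i) ∈ R.weylGroup :=
        Subgroup.subset_closure ⟨_, sroot_mem_Phi R i, rfl⟩
      have hw' : w * sRefl (R.sroot i) ∈ R.weylGroup := mul_mem hw hsiW
      have hcard := filter_card_lt R hw hi
      rw [hk] at hcard
      have hIH := IH _ hcard (w * sRefl (R.sroot i)) hw' rfl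
      have hexp : w v = (w * sRefl (R.sroot i)) v + copair v (R.sroot i) • (w (R.sroot i)) := by
        have h1 : (w * sRefl (R.sroot i)) v = w (sRefl (R.sroot i) v) := rfl
        rw [h1, sRefl_apply, map_sub, map_smul]
        abel
      have hneg : 0 < ⟪R.rho, -(w (R.sroot i))⟫ := by
        refine inner_rho_pos R ?_
        exact neg_mem_pos R (weyl_maps_root R hw _ (sroot_mem_Phi R i)) hi
      rw [inner_neg_right] at hneg
      have h2 : ⟪w (R.sroot i), R.rho⟫ < 0 := by
        rw [real_inner_comm]; linarith
      have h3 : copair v (R.sroot i) * ⟪w (R.sroot i), R.rho⟫ ≤ 0 :=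
        mul_nonpos_of_nonneg_of_nonpos (hv i) (le_of_lt h2)
      rw [hexp, inner_add_left, real_inner_smul_left]
      linarith

end Dec

end SpinAux


/-- For a dominant integral weight `δ`, the spin norm
`‖δ‖_spin = ‖{δ − ρ} + ρ‖` satisfies `‖δ‖_spin ≥ ‖δ‖`, with equality if and only if
`δ` is regular.  Here `ν = {δ − ρ}` is encoded by the hypothesis that it is the dominant
representative of the Weyl orbit of `δ − ρ`. -/
theorem statement7 {V : Type*} [NormedAddCommGroup V] [InnerProductSpace ℝ V]
    [FiniteDimensional ℝ V] (R : RootSystemCtx V)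
    (δ : V) (hδ : ∀ i, ∃ m : ℕ, copair δ (R.sroot i) = (m : ℝ))
    (ν : V) (hν : R.IsDomRep (δ - R.rho) ν) :
    ‖δ‖ ≤ ‖ν + R.rho‖ ∧ (‖ν + R.rho‖ = ‖δ‖ ↔ ∀ i, 0 < copair δ (R.sroot i)) := by
  classical
  obtain ⟨hνdom, w, hwW, hww⟩ := hν
  set ρ := R.rho with hρ
  set lam := δ - R.rho with hlam
  have hδeq : lam + ρ = δ := by rw [hlam, hρ]; abel
  have hnormν : ‖ν‖ = ‖lam‖ := by rw [← hww]; exact w.norm_map lam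
  have hsq1 : ‖δ‖ ^ 2 = ‖lam‖ ^ 2 + 2 * ⟪lam, ρ⟫ + ‖ρ‖ ^ 2 := by
    rw [← hδeq]; exact norm_add_sq_real lam ρ
  have hsq2 : ‖ν + ρ‖ ^ 2 = ‖lam‖ ^ 2 + 2 * ⟪ν, ρ⟫ + ‖ρ‖ ^ 2 := by
    rw [norm_add_sq_real, hnormν]
  have hwinv : w⁻¹ ν = lam := by
    rw [← hww]
    show w.symm (w lam) = lam
    exact w.symm_apply_apply lam
  have hle : ⟪lam, ρ⟫ ≤ ⟪ν, ρ⟫ := by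
    have h := key_lemma R hνdom w⁻¹ (inv_mem hwW)
    rwa [hwinv] at h
  have hnn1 : (0:ℝ) ≤ ‖δ‖ := norm_nonneg δ
  have hnn2 : (0:ℝ) ≤ ‖ν + ρ‖ := norm_nonneg _
  refine ⟨by nlinarith, ?_, ?_⟩
  · intro heq i
    by_contra hnp
    obtain ⟨m, hm⟩ := hδ i
    rw [hm] at hnp
    have hm0 : (m:ℝ) = 0 := le_antisymm (not_lt.mp hnp) (Nat.cast_nonneg m)
    have hcl : copair lam (R.sroot i) = -1 := by
      rw [hlam, copair_sub', hm, hm0, copair_rho_sroot]; ring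
    have hgW : sRefl (R.sroot i) * w⁻¹ ∈ R.weylGroup :=
      mul_mem (Subgroup.subset_closure ⟨_, sroot_mem_Phi R i, rfl⟩) (inv_mem hwW)
    have hg := key_lemma R hνdom _ hgW
    have hgν : (sRefl (R.sroot i) * w⁻¹) ν = lam + R.sroot i := by
      show sRefl (R.sroot i) (w⁻¹ ν) = _
      rw [hwinv, sRefl_apply, hcl, neg_smul, one_smul, sub_neg_eq_add]
    rw [hgν, inner_add_left] at hg
    have hpos : (0:ℝ) < ⟪R.sroot i, ρ⟫ := by
      rw [real_inner_comm]; exact inner_rho_sroot_pos R i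
    have hlt : ⟪lam, ρ⟫ < ⟪ν, ρ⟫ := by linarith
    rw [heq] at hsq2
    linarith
  · intro hreg
    have hlamdom : R.IsDominant lam := by
      intro j
      obtain ⟨m, hm⟩ := hδ j
      have h0 : (0:ℝ) < m := by rw [← hm]; exact hreg j
      have hm' : 0 < m := by exact_mod_cast h0
      have h1 : (1:ℝ) ≤ m := by exact_mod_cast hm'
      rw [hlam, copair_sub', hm, copair_rho_sroot]
      linarith
    have hge := key_lemma R hlamdom w hwW
    rw [hww] at hge
    have heq2 : ⟪ν, ρ⟫ = ⟪lam, ρ⟫ := le_antisymm hge hle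
    nlinarith
end
end
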